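/- (Lorenzoni–Magri) Let E be a real normed vector space and N a smooth (1,1) tensor field on E with vanishing Nijenhuis torsion, T(N) = 0. Let a_k : E → ℝ, k = 0,1,2,…, be smooth functions and define (1,1) tensor fields M_k recursively by M_0 = I (the identity) and M_{k+1} = N M_k − a_k·I (pointwise). Assume the chain of conservation laws Da_k(x) = Da_0(x) ∘ M_k(x) holds for all k ≥ 0 and all x ∈ E. Then for all nonnegative integers i, j and every vector field X on E, [M_i, M_j]_X = 0; hence the hydrodynamic-type flows ∂x/∂t_k + M_k(x)(∂x/∂y) = 0 constitute a hierarchy. -/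

import Mathlib

variable {E : Type*} [NormedAddCommGroup E] [NormedSpace ℝ E]

/-- Lie bracket of vector fields on `E`: `[X,Y](x) = DY(x)(X(x)) − DX(x)(Y(x))`. -/
noncomputable def lie (X Y : E → E) : E → E :=
  fun x => fderiv ℝ Y x (X x) - fderiv ℝ X x (Y x)

/-- Pointwise action of a (1,1) tensor field on a vector field. -/
def app (N : E → E →L[ℝ] E) (X : E → E) : E → E := fun x => N x (X x)

/-- Pointwise `k`-th power of a (1,1) tensor field. -/
def pw (N : E → E →L[ℝ] E) (k : ℕ) : E → E →L[ℝ] E := fun x => (N x) ^ k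

/-- Frölicher–Nijenhuis bracket of two (1,1) tensor fields, evaluated on vector fields. -/
noncomputable def fnBracket (N₁ N₂ : E → E →L[ℝ] E) (X Y : E → E) : E → E :=
  fun x =>
    N₁ x (N₂ x (lie X Y x)) + N₂ x (N₁ x (lie X Y x))
      + lie (app N₁ X) (app N₂ Y) x + lie (app N₂ X) (app N₁ Y) x
      - N₁ x (lie (app N₂ X) Y x + lie X (app N₂ Y) x)
      - N₂ x (lie (app N₁ X) Y x + lie X (app N₁ Y) x)

/-- Nijenhuis torsion of a (1,1) tensor field, evaluated on vector fields. -/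
noncomputable def tor (N : E → E →L[ℝ] E) (X Y : E → E) : E → E :=
  fun x =>
    lie (app N X) (app N Y) x
      + N x (N x (lie X Y x) - lie (app N X) Y x - lie X (app N Y) x)

/-- Haantjes tensor of a (1,1) tensor field, evaluated on vector fields. -/
noncomputable def haan (M : E → E →L[ℝ] E) (X Y : E → E) : E → E :=
  fun x =>
    M x (M x (tor M X Y x)) + tor M (app M X) (app M Y) x
      - M x (tor M (app M X) Y x + tor M X (app M Y) x)

/-- The bracket `[A,B]_X = [AX,BX] − A[X,BX] + B[X,AX]` of two (1,1) tensor fields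
with respect to a vector field `X`. -/
noncomputable def brX (A B : E → E →L[ℝ] E) (X : E → E) : E → E :=
  fun x =>
    lie (app A X) (app B X) x - A x (lie X (app B X) x) + B x (lie X (app A X) x)

/-- A 1-form is closed iff its Fréchet derivative is symmetric. -/
def IsClosedOneForm (ρ : E → E →L[ℝ] ℝ) : Prop :=
  ∀ x u v, fderiv ℝ ρ x u v = fderiv ℝ ρ x v u


section AuxLM

variable {F : Type*} [NormedAddCommGroup F] [NormedSpace ℝ F]

lemma diffAt {f : E → F} (hf : ContDiff ℝ (⊤ : ℕ∞) f) (x : E) : DifferentiableAt ℝ f x :=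
  (hf.differentiable (by simp)) x

lemma fderiv_eval {c : E → E →L[ℝ] E} (hc : ContDiff ℝ (⊤ : ℕ∞) c) (x h w : E) :
    fderiv ℝ c x h w = fderiv ℝ (fun y => c y w) x h := by
  rw [fderiv_clm_apply (diffAt hc x) (differentiableAt_const w)]
  simp

lemma fderiv_app {B : E → E →L[ℝ] E} {X : E → E} (hB : ContDiff ℝ (⊤ : ℕ∞) B)
    (hX : ContDiff ℝ (⊤ : ℕ∞) X) (x h : E) :
    fderiv ℝ (app B X) x h = B x (fderiv ℝ X x h) + fderiv ℝ B x h (X x) := by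
  rw [show app B X = fun y => B y (X y) from rfl,
    fderiv_clm_apply (diffAt hB x) (diffAt hX x)]
  simp

lemma tor_pt (N : E → E →L[ℝ] E) (hN : ContDiff ℝ (⊤ : ℕ∞) N)
    (hT : ∀ X Y : E → E, ContDiff ℝ (⊤ : ℕ∞) X → ContDiff ℝ (⊤ : ℕ∞) Y →
      ∀ x, tor N X Y x = 0) (x v w : E) :
    fderiv ℝ N x (N x v) w - fderiv ℝ N x (N x w) v
      + N x (fderiv ℝ N x w v) - N x (fderiv ℝ N x v w) = 0 := by
  have h := hT (fun _ => v) (fun _ => w) contDiff_const contDiff_const x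
  have hv : ∀ u : E, app N (fun _ : E => u) = fun y => N y u := fun _ => rfl
  simp only [tor, lie, hv, fderiv_fun_const, Pi.zero_apply, ContinuousLinearMap.zero_apply] at h
  rw [← fderiv_eval hN x (N x v) w, ← fderiv_eval hN x (N x w) v,
    ← fderiv_eval hN x w v, ← fderiv_eval hN x v w] at h
  simp only [zero_sub, sub_zero, neg_sub, map_sub] at h
  simp only [map_zero, map_neg, zero_sub, neg_neg] at h
  linear_combination (norm := abel1) h

section Rec
variable (N : E → E →L[ℝ] E) (hN : ContDiff ℝ (⊤ : ℕ∞) N)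
    (a : ℕ → E → ℝ) (ha : ∀ k, ContDiff ℝ (⊤ : ℕ∞) (a k))
    (M : ℕ → E → E →L[ℝ] E)
    (hM0 : ∀ x, M 0 x = 1)
    (hMrec : ∀ k x, M (k + 1) x = (N x).comp (M k x) - a k x • (1 : E →L[ℝ] E))

include hN ha hM0 hMrec

lemma M_smooth : ∀ k, ContDiff ℝ (⊤ : ℕ∞) (M k) := by
  intro k
  induction k with
  | zero =>
    have : M 0 = fun _ => (1 : E →L[ℝ] E) := funext hM0
    rw [this]; exact contDiff_const
  | succ k ih =>
    have : M (k + 1) = fun x => (N x).comp (M k x) - a k x • (1 : E →L[ℝ] E) :=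
      funext (hMrec k)
    rw [this]
    exact (hN.clm_comp ih).sub ((ha k).smul contDiff_const)

lemma M_comm_N : ∀ k x, (N x).comp (M k x) = (M k x).comp (N x) := by
  intro k
  induction k with
  | zero => intro x; rw [hM0 x]; simp [ContinuousLinearMap.one_def]
  | succ k ih =>
    intro x
    rw [hMrec k x]
    simp only [ContinuousLinearMap.comp_sub, ContinuousLinearMap.sub_comp,
      ContinuousLinearMap.smul_comp, ContinuousLinearMap.comp_smul,
      ContinuousLinearMap.one_def, ContinuousLinearMap.comp_id, ContinuousLinearMap.id_comp]
    rw [ContinuousLinearMap.comp_assoc, ih x, ← ContinuousLinearMap.comp_assoc]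

lemma M_comm : ∀ i j x, (M i x).comp (M j x) = (M j x).comp (M i x) := by
  intro i
  induction i with
  | zero => intro j x; rw [hM0 x]; simp [ContinuousLinearMap.one_def]
  | succ i ih =>
    intro j x
    rw [hMrec i x]
    simp only [ContinuousLinearMap.comp_sub, ContinuousLinearMap.sub_comp,
      ContinuousLinearMap.smul_comp, ContinuousLinearMap.comp_smul,
      ContinuousLinearMap.one_def, ContinuousLinearMap.comp_id, ContinuousLinearMap.id_comp]
    rw [ContinuousLinearMap.comp_assoc, ih j x, ← ContinuousLinearMap.comp_assoc,
      M_comm_N N hN a ha M hM0 hMrec j x, ContinuousLinearMap.comp_assoc]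

lemma Mw_smooth (k : ℕ) (w : E) : ContDiff ℝ (⊤ : ℕ∞) (fun y => M k y w) :=
  (M_smooth N hN a ha M hM0 hMrec k).clm_apply contDiff_const

lemma M_fderiv (hcons : ∀ k x, fderiv ℝ (a k) x = (fderiv ℝ (a 0) x).comp (M k x))
    (k : ℕ) (x h w : E) :
    fderiv ℝ (fun y => M (k + 1) y w) x h
      = fderiv ℝ N x h (M k x w) + N x (fderiv ℝ (fun y => M k y w) x h)
        - (fderiv ℝ (a 0) x (M k x h)) • w := by
  have e : (fun y => M (k + 1) y w) = fun y => N y (M k y w) - a k y • w := by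
    funext y
    rw [hMrec k y]
    simp
  rw [e, fderiv_fun_sub ((diffAt hN x).clm_apply (diffAt (Mw_smooth N hN a ha M hM0 hMrec k w) x))
      ((diffAt (ha k) x).smul_const w)]
  rw [fderiv_clm_apply (diffAt hN x) (diffAt (Mw_smooth N hN a ha M hM0 hMrec k w) x),
    fderiv_smul_const (diffAt (ha k) x) w]
  have hk : fderiv ℝ (a k) x h = fderiv ℝ (a 0) x (M k x h) := by rw [hcons k x]; rfl
  simp [hk]
  abel

lemma keyK (hcons : ∀ k x, fderiv ℝ (a k) x = (fderiv ℝ (a 0) x).comp (M k x))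
    (hT : ∀ X Y : E → E, ContDiff ℝ (⊤ : ℕ∞) X → ContDiff ℝ (⊤ : ℕ∞) Y →
      ∀ x, tor N X Y x = 0) :
    ∀ j x v u,
    fderiv ℝ (fun y => M j y u) x (N x v) - N x (fderiv ℝ (fun y => M j y u) x v)
      - fderiv ℝ N x (M j x u) v + M j x (fderiv ℝ N x u v)
      + (fderiv ℝ (a 0) x (M j x v)) • u - (fderiv ℝ (a 0) x v) • (M j x u) = 0 := by
  intro j
  induction j with
  | zero =>
    intro x v u
    have e : (fun y => M 0 y u) = fun _ => u := by
      funext y; rw [hM0 y]; rfl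
    rw [e, hM0 x]
    simp
  | succ j ih =>
    intro x v u
    have hIH := congrArg (N x) (ih x v u)
    simp only [map_sub, map_add, map_smul, map_zero] at hIH
    have hTor := tor_pt N hN hT x v (M j x u)
    have hcomm : ∀ z, N x (M j x z) = M j x (N x z) := fun z =>
      DFunLike.congr_fun (M_comm_N N hN a ha M hM0 hMrec j x) z
    rw [M_fderiv N hN a ha M hM0 hMrec hcons j x (N x v) u,
      M_fderiv N hN a ha M hM0 hMrec hcons j x v u, hMrec j x]
    simp only [ContinuousLinearMap.sub_apply, ContinuousLinearMap.comp_apply,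
      ContinuousLinearMap.smul_apply, ContinuousLinearMap.one_apply,
      map_sub, map_add, map_smul, smul_sub, smul_eq_mul]
    rw [hcomm v]
    linear_combination (norm := module) hIH + hTor

lemma keyG (hcons : ∀ k x, fderiv ℝ (a k) x = (fderiv ℝ (a 0) x).comp (M k x))
    (hT : ∀ X Y : E → E, ContDiff ℝ (⊤ : ℕ∞) X → ContDiff ℝ (⊤ : ℕ∞) Y →
      ∀ x, tor N X Y x = 0) :
    ∀ i j x u,
    fderiv ℝ (fun y => M j y u) x (M i x u) - fderiv ℝ (fun y => M i y u) x (M j x u)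
      - M i x (fderiv ℝ (fun y => M j y u) x u) + M j x (fderiv ℝ (fun y => M i y u) x u)
      = 0 := by
  intro i
  induction i with
  | zero =>
    intro j x u
    have e : (fun y => M 0 y u) = fun _ => u := by
      funext y; rw [hM0 y]; rfl
    rw [e, hM0 x]
    simp
  | succ i ih =>
    intro j x u
    have hIH := congrArg (N x) (ih j x u)
    simp only [map_sub, map_add, map_smul, map_zero] at hIH
    have hK := keyK N hN a ha M hM0 hMrec hcons hT j x (M i x u) u
    have hcomm : ∀ z, M i x (M j x z) = M j x (M i x z) := fun z =>
      DFunLike.congr_fun (M_comm N hN a ha M hM0 hMrec i j x) z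
    have hcommN : ∀ z, N x (M i x z) = M i x (N x z) := fun z =>
      DFunLike.congr_fun (M_comm_N N hN a ha M hM0 hMrec i x) z
    have hcommNj : ∀ z, N x (M j x z) = M j x (N x z) := fun z =>
      DFunLike.congr_fun (M_comm_N N hN a ha M hM0 hMrec j x) z
    rw [M_fderiv N hN a ha M hM0 hMrec hcons i x (M j x u) u,
      M_fderiv N hN a ha M hM0 hMrec hcons i x u u, hMrec i x]
    simp only [ContinuousLinearMap.sub_apply, ContinuousLinearMap.comp_apply,
      ContinuousLinearMap.smul_apply, ContinuousLinearMap.one_apply,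
      map_sub, map_add, map_smul, smul_sub, smul_eq_mul]
    simp only [hcomm, hcommN, hcommNj] at hIH hK ⊢
    linear_combination (norm := module) hIH + hK

end Rec

end AuxLM

theorem stmt11 (N : E → E →L[ℝ] E) (hN : ContDiff ℝ (⊤ : ℕ∞) N)
    (hT : ∀ X Y : E → E, ContDiff ℝ (⊤ : ℕ∞) X → ContDiff ℝ (⊤ : ℕ∞) Y →
      ∀ x, tor N X Y x = 0)
    (a : ℕ → E → ℝ) (ha : ∀ k, ContDiff ℝ (⊤ : ℕ∞) (a k))
    (M : ℕ → E → E →L[ℝ] E)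
    (hM0 : ∀ x, M 0 x = 1)
    (hMrec : ∀ k x, M (k + 1) x = (N x).comp (M k x) - a k x • (1 : E →L[ℝ] E))
    (hcons : ∀ k x, fderiv ℝ (a k) x = (fderiv ℝ (a 0) x).comp (M k x))
    (i j : ℕ) (X : E → E) (hX : ContDiff ℝ (⊤ : ℕ∞) X) (x : E) :
    brX (M i) (M j) X x = 0 := by
  have hMi := M_smooth N hN a ha M hM0 hMrec i
  have hMj := M_smooth N hN a ha M hM0 hMrec j
  have hG := keyG N hN a ha M hM0 hMrec hcons hT i j x (X x)
  have hcomm : ∀ z, M i x (M j x z) = M j x (M i x z) := fun z =>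
    DFunLike.congr_fun (M_comm N hN a ha M hM0 hMrec i j x) z
  simp only [brX, lie, app]
  rw [fderiv_app hMj hX, fderiv_app hMi hX, fderiv_app hMj hX, fderiv_app hMi hX]
  rw [fderiv_eval hMj x (M i x (X x)) (X x), fderiv_eval hMi x (M j x (X x)) (X x),
    fderiv_eval hMj x (X x) (X x), fderiv_eval hMi x (X x) (X x)]
  simp only [map_sub, map_add]
  simp only [hcomm]
  linear_combination (norm := module) hG
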